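/- Under Assumptions (A1) and (A3), define for ε, δ > 0 and t ≥ 0: 𝓡_t^{ε,δ} := (δ/(2ε))·( Σ_{i=0}^{⌊t/δ⌋−1} δ·κ'(x(iδ))·f(x(iδ))·E((i+1)δ, t) − ∫₀ᵗ κ'(x(s))·f(x(s))·E(s,t) ds ). Then for every integer p ≥ 1 there exists a constant C > 0, independent of t, ε and δ, such that |𝓡_t^{ε,δ}|^p ≤ C·δ^{2p}/ε^p for all ε, δ ∈ (0,1) and all t ≥ 0. -/

import Mathlib

/-- The sampling map `π_δ(t) = δ·⌊t/δ⌋`. -/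
noncomputable def piD (δ t : ℝ) : ℝ := δ * (⌊t / δ⌋ : ℤ)

open Set Filter MeasureTheory intervalIntegral Real

lemma abs_deriv_le_of_slope (g B : ℝ → ℝ) (a : ℝ) (hg : DifferentiableAt ℝ g a)
    (hB : ContinuousAt B a) (h : ∀ b, |g b - g a| ≤ B b * |b - a|) :
    |deriv g a| ≤ B a := by
  have hs : Tendsto (slope g a) (nhdsWithin a {a}ᶜ) (nhds (deriv g a)) :=
    hasDerivAt_iff_tendsto_slope.mp hg.hasDerivAt
  have h1 : Tendsto (fun b => |slope g a b|) (nhdsWithin a {a}ᶜ) (nhds |deriv g a|) := hs.abs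
  have h2 : Tendsto B (nhdsWithin a {a}ᶜ) (nhds (B a)) := hB.continuousWithinAt
  refine le_of_tendsto_of_tendsto h1 h2 ?_
  filter_upwards [eventually_mem_nhdsWithin] with b hb
  have hba : b ≠ a := hb
  have habs : (0:ℝ) < |b - a| := by
    rw [abs_pos, sub_ne_zero]; exact hba
  have : |slope g a b| = |g b - g a| / |b - a| := by
    rw [slope_def_field, abs_div]
  rw [this, div_le_iff₀ habs]
  exact h b

lemma abs_exp_sub_one_le' (z : ℝ) : |Real.exp z - 1| ≤ |z| * Real.exp |z| := by
  rcases le_or_gt 0 z with hz | hz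
  · rw [abs_of_nonneg hz, abs_of_nonneg (by nlinarith [Real.add_one_le_exp z] : (0:ℝ) ≤ Real.exp z - 1)]
    have h1 := Real.add_one_le_exp (-z)
    have h2 : Real.exp z * Real.exp (-z) = 1 := by rw [← Real.exp_add]; simp
    nlinarith [Real.exp_pos z]
  · rw [abs_of_neg hz]
    have h1 := Real.add_one_le_exp z
    have h3 : Real.exp z ≤ 1 := by
      rw [show (1:ℝ) = Real.exp 0 by simp]; exact Real.exp_le_exp.mpr hz.le
    rw [abs_of_nonpos (by linarith : Real.exp z - 1 ≤ 0)]
    have h4 : (1:ℝ) ≤ Real.exp (-z) := Real.one_le_exp (by linarith)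
    nlinarith [Real.exp_pos z]

lemma barrier (f κ : ℝ → ℝ) (lam γ : ℝ) (hlam : 0 < lam)
    (hcontr : ∀ a b : ℝ, (a - b) * (f a - f b) ≤ -lam * (a - b) ^ 2)
    (hκbd : ∀ a : ℝ, |κ a| ≤ γ)
    (z : ℝ → ℝ) (T : ℝ)
    (hz : ∀ r ∈ Icc (0:ℝ) T, HasDerivAt z (f (z r) + κ (z r)) r)
    (R : ℝ) (hR0 : |z 0| ≤ R) (hRB : (|f 0| + γ) / lam ≤ R) :
    ∀ t ∈ Icc (0:ℝ) T, |z t| ≤ R := by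
  have hγ : 0 ≤ γ := le_trans (abs_nonneg _) (hκbd 0)
  have hRpos : 0 ≤ R := le_trans (by positivity) hRB
  by_contra hcon
  push_neg at hcon
  obtain ⟨t₁, ht₁, hgt⟩ := hcon
  set c := |z t₁| with hc
  have hcz : ContinuousOn z (Icc 0 t₁) := fun r hr =>
    ((hz r ⟨hr.1, hr.2.trans ht₁.2⟩).continuousAt).continuousWithinAt
  set S := {t ∈ Icc (0:ℝ) t₁ | c ≤ |z t|} with hS
  have hSne : S.Nonempty := ⟨t₁, ⟨⟨ht₁.1, le_rfl⟩, le_rfl⟩⟩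
  have hScl : IsClosed S := by
    have : S = Icc 0 t₁ ∩ (fun t => |z t|) ⁻¹' Ici c := by
      ext u; simp [hS, Set.mem_sep_iff, and_comm]
    rw [this]
    exact (hcz.abs).preimage_isClosed_of_isClosed isClosed_Icc isClosed_Ici
  have hSbdd : BddBelow S := ⟨0, fun u hu => hu.1.1⟩
  set τ := sInf S with hτ
  have hτS : τ ∈ S := hScl.csInf_mem hSne hSbdd
  have hτicc : τ ∈ Icc 0 t₁ := hτS.1
  have hτc : c ≤ |z τ| := hτS.2
  have hRc : R < c := hgt
  have hzero : (0:ℝ) < τ := by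
    rcases eq_or_lt_of_le hτicc.1 with h0 | h0
    · exfalso
      rw [← h0] at hτc
      exact absurd (le_trans hτc hR0) (not_le.mpr hRc)
    · exact h0
  have hτT : τ ∈ Icc 0 T := ⟨hτicc.1, hτicc.2.trans ht₁.2⟩
  have hd : HasDerivAt (fun r => z r * z r) (2 * z τ * (f (z τ) + κ (z τ))) τ := by
    have h := (hz τ hτT).mul (hz τ hτT)
    exact h.congr_deriv (by ring)
  have hdneg : 2 * z τ * (f (z τ) + κ (z τ)) < 0 := by
    set a := z τ with ha
    have h1 : (a - 0) * (f a - f 0) ≤ -lam * (a - 0) ^ 2 := hcontr a 0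
    have h2 : |κ a| ≤ γ := hκbd a
    have h3 : R < |a| := lt_of_lt_of_le hRc hτc
    have hlamR : |f 0| + γ ≤ lam * R := by
      rw [div_le_iff₀ hlam] at hRB; linarith [hRB]
    have haf0 : a * f 0 ≤ |a| * |f 0| := by
      calc a * f 0 ≤ |a * f 0| := le_abs_self _
      _ = |a| * |f 0| := abs_mul _ _
    have haκ : a * κ a ≤ |a| * γ := by
      calc a * κ a ≤ |a * κ a| := le_abs_self _
      _ = |a| * |κ a| := abs_mul _ _
      _ ≤ |a| * γ := by
            apply mul_le_mul_of_nonneg_left h2 (abs_nonneg a)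
    have hsq : a ^ 2 = |a| ^ 2 := (sq_abs a).symm
    nlinarith [abs_nonneg a, mul_pos hlam (lt_of_le_of_lt hRpos h3)]
  have hslope : Tendsto (slope (fun r => z r * z r) τ) (nhdsWithin τ {τ}ᶜ)
      (nhds (2 * z τ * (f (z τ) + κ (z τ)))) := hasDerivAt_iff_tendsto_slope.mp hd
  have hslope' : Tendsto (slope (fun r => z r * z r) τ) (nhdsWithin τ (Iio τ))
      (nhds (2 * z τ * (f (z τ) + κ (z τ)))) :=
    hslope.mono_left (nhdsWithin_mono τ (fun u hu => ne_of_lt hu))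
  have hev1 : ∀ᶠ u in nhdsWithin τ (Iio τ), slope (fun r => z r * z r) τ u < 0 :=
    hslope'.eventually (eventually_lt_nhds hdneg)
  have hev2 : Ioo (0:ℝ) τ ∈ nhdsWithin τ (Iio τ) :=
    Ioo_mem_nhdsLT_of_mem ⟨hzero, le_rfl⟩
  obtain ⟨u, hu1, hu2⟩ := (hev1.and (eventually_of_mem hev2 (fun u hu => hu))).exists
  have huτ : u < τ := hu2.2
  have huneg : u - τ < 0 := by linarith
  have hphi : z τ * z τ < z u * z u := by
    have := hu1
    rw [slope_def_field] at this
    have hne : u - τ ≠ 0 := ne_of_lt huneg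
    rw [div_neg_iff] at this
    rcases this with ⟨hnum, hden⟩ | ⟨hnum, hden⟩
    · linarith
    · linarith
  have hcu : c < |z u| := by
    by_contra hle
    push_neg at hle
    have h1 : |z u| * |z u| ≤ c * c := mul_self_le_mul_self (abs_nonneg _) hle
    have h2 : c * c ≤ |z τ| * |z τ| := mul_self_le_mul_self (le_trans hRpos hRc.le) hτc
    rw [abs_mul_abs_self (z u)] at h1
    rw [abs_mul_abs_self (z τ)] at h2
    linarith
  have huS : u ∈ S := ⟨⟨hu2.1.le, le_trans huτ.le hτicc.2⟩, hcu.le⟩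
  exact absurd (csInf_le hSbdd huS) (not_le.mpr huτ)

lemma good (f κ : ℝ → ℝ) (hfc : Continuous f) (hκc : Continuous κ) (x₀ : ℝ) (x : ℝ → ℝ)
    (hx : ∀ t : ℝ, 0 ≤ t → x t = x₀ + ∫ s in (0:ℝ)..t, (f (x s) + κ (x s)))
    (T : ℝ) (hT : 0 ≤ T)
    (hint : IntervalIntegrable (fun s => f (x s) + κ (x s)) volume 0 T) :
    ContinuousOn x (Icc 0 T) ∧
    ∃ z : ℝ → ℝ, (∀ t ∈ Icc (0:ℝ) T, z t = x t) ∧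
      (∀ r ∈ Icc (0:ℝ) T, HasDerivAt z (f (z r) + κ (z r)) r) := by
  set h : ℝ → ℝ := fun s => f (x s) + κ (x s) with hh
  have huIcc : uIcc (0:ℝ) T = Icc 0 T := uIcc_of_le hT
  have hprim : ContinuousOn (fun t => ∫ s in (0:ℝ)..t, h s) (Icc 0 T) := by
    rw [← huIcc]
    exact intervalIntegral.continuousOn_primitive_interval' hint left_mem_uIcc
  have hcx : ContinuousOn x (Icc 0 T) := by
    refine ContinuousOn.congr ((continuousOn_const (c := x₀)).add hprim) ?_
    intro t ht
    exact hx t ht.1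
  refine ⟨hcx, ?_⟩
  set cl : ℝ → ℝ := fun s => min (max s 0) T with hcl
  have hclc : Continuous cl := ((continuous_id.max continuous_const).min continuous_const)
  have hclmem : ∀ s, cl s ∈ Icc (0:ℝ) T := by
    intro s
    constructor
    · exact le_min (le_max_right s 0) hT
    · exact min_le_right _ _
  have hcleq : ∀ s ∈ Icc (0:ℝ) T, cl s = s := by
    intro s hs
    simp only [hcl]
    rw [max_eq_left hs.1, min_eq_left hs.2]
  set y : ℝ → ℝ := fun s => x (cl s) with hy
  have hyc : Continuous y := hcx.comp_continuous hclc hclmem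
  set hy2 : ℝ → ℝ := fun s => f (y s) + κ (y s) with hhy2
  have hy2c : Continuous hy2 := (hfc.comp hyc).add (hκc.comp hyc)
  set z : ℝ → ℝ := fun r => x₀ + ∫ s in (0:ℝ)..r, hy2 s with hz
  have hzx : ∀ t ∈ Icc (0:ℝ) T, z t = x t := by
    intro t ht
    have hcong : (∫ s in (0:ℝ)..t, hy2 s) = ∫ s in (0:ℝ)..t, h s := by
      apply intervalIntegral.integral_congr
      intro s hs
      rw [uIcc_of_le ht.1] at hs
      have hsT : s ∈ Icc (0:ℝ) T := ⟨hs.1, hs.2.trans ht.2⟩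
      simp only [hhy2, hy]
      rw [hcleq s hsT]
    rw [hz]
    simp only
    rw [hcong, ← hx t ht.1]
  refine ⟨z, hzx, ?_⟩
  intro r hr
  have hd : HasDerivAt (fun u => ∫ s in (0:ℝ)..u, hy2 s) (hy2 r) r :=
    (hy2c.integral_hasStrictDerivAt 0 r).hasDerivAt
  have hd2 : HasDerivAt z (hy2 r) r := hd.const_add x₀
  have : hy2 r = f (z r) + κ (z r) := by
    simp only [hhy2, hy]
    rw [hcleq r hr, hzx r hr]
  rwa [this] at hd2

lemma good_bound (f κ : ℝ → ℝ) (hfc : Continuous f) (hκc : Continuous κ)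
    (lam γ : ℝ) (hlam : 0 < lam)
    (hcontr : ∀ a b : ℝ, (a - b) * (f a - f b) ≤ -lam * (a - b) ^ 2)
    (hκbd : ∀ a : ℝ, |κ a| ≤ γ)
    (x₀ : ℝ) (x : ℝ → ℝ)
    (hx : ∀ t : ℝ, 0 ≤ t → x t = x₀ + ∫ s in (0:ℝ)..t, (f (x s) + κ (x s)))
    (T : ℝ) (hT : 0 ≤ T)
    (hint : IntervalIntegrable (fun s => f (x s) + κ (x s)) volume 0 T)
    (R : ℝ) (hR0 : |x₀| ≤ R) (hRB : (|f 0| + γ) / lam ≤ R) :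
    ∀ t ∈ Icc (0:ℝ) T, |x t| ≤ R := by
  obtain ⟨hcx, z, hzx, hzd⟩ := good f κ hfc hκc x₀ x hx T hT hint
  have hx0 : x 0 = x₀ := by
    have := hx 0 le_rfl
    simpa using this
  have hz0 : |z 0| ≤ R := by
    rw [hzx 0 ⟨le_rfl, hT⟩, hx0]; exact hR0
  intro t ht
  rw [← hzx t ht]
  exact barrier f κ lam γ hlam hcontr hκbd z T hzd R hz0 hRB t ht

lemma bootstrap (f κ : ℝ → ℝ) (hfc : Continuous f) (hκc : Continuous κ)
    (lam γ : ℝ) (hlam : 0 < lam)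
    (hcontr : ∀ a b : ℝ, (a - b) * (f a - f b) ≤ -lam * (a - b) ^ 2)
    (hκbd : ∀ a : ℝ, |κ a| ≤ γ)
    (x₀ : ℝ) (x : ℝ → ℝ)
    (hx : ∀ t : ℝ, 0 ≤ t → x t = x₀ + ∫ s in (0:ℝ)..t, (f (x s) + κ (x s)))
    (R : ℝ) (hR0 : |x₀| ≤ R) (hRB : (|f 0| + γ) / lam ≤ R)
    (M : ℝ) (hMB : ∀ v : ℝ, |v| ≤ R → |f v + κ v| ≤ M) :
    ∀ T : ℝ, 0 ≤ T → IntervalIntegrable (fun s => f (x s) + κ (x s)) volume 0 T := by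
  set h : ℝ → ℝ := fun s => f (x s) + κ (x s) with hh
  by_contra hcon
  push_neg at hcon
  obtain ⟨T₁, hT₁, hbad₁⟩ := hcon
  set Bad : Set ℝ := {T | 0 ≤ T ∧ ¬ IntervalIntegrable h volume 0 T} with hBad
  have hBne : Bad.Nonempty := ⟨T₁, hT₁, hbad₁⟩
  have hBbdd : BddBelow Bad := ⟨0, fun b hb => hb.1⟩
  set τ := sInf Bad with hτ
  have hτ0 : 0 ≤ τ := le_csInf hBne (fun b hb => hb.1)
  have hup : ∀ t, τ < t → ¬ IntervalIntegrable h volume 0 t := by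
    intro t ht hI
    obtain ⟨b, hbB, hbt⟩ := (csInf_lt_iff hBbdd hBne).mp ht
    refine hbB.2 (hI.mono_set ?_)
    rw [uIcc_of_le hbB.1, uIcc_of_le (le_trans hτ0 ht.le)]
    exact Icc_subset_Icc le_rfl hbt.le
  have hconst : ∀ t, τ < t → x t = x₀ := by
    intro t ht
    rw [hx t (le_trans hτ0 ht.le), intervalIntegral.integral_undef (hup t ht), add_zero]
  have hgood : ∀ t, 0 ≤ t → t < τ → IntervalIntegrable h volume 0 t := by
    intro t ht hlt
    by_contra hb
    exact absurd (csInf_le hBbdd ⟨ht, hb⟩) (not_le.mpr hlt)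
  have hxbd : ∀ s, 0 ≤ s → s < τ → |x s| ≤ R := by
    intro s hs hsτ
    exact good_bound f κ hfc hκc lam γ hlam hcontr hκbd x₀ x hx s hs
      (hgood s hs hsτ) R hR0 hRB s ⟨hs, le_rfl⟩
  have hcxIco : ContinuousOn x (Ico 0 τ) := by
    intro s hs
    obtain ⟨t, hst, htτ⟩ := exists_between hs.2
    have hcx := (good f κ hfc hκc x₀ x hx t (le_trans hs.1 hst.le)
      (hgood t (le_trans hs.1 hst.le) htτ)).1
    have h1 : ContinuousWithinAt x (Icc 0 t) s := hcx s ⟨hs.1, hst.le⟩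
    have h2 : ContinuousWithinAt x (Ico 0 τ ∩ Iio t) s :=
      h1.mono (fun u hu => ⟨hu.1.1, hu.2.le⟩)
    exact (continuousWithinAt_inter (Iio_mem_nhds hst)).mp h2
  have hIτ1 : IntervalIntegrable h volume 0 (τ + 1) := by
    rw [intervalIntegrable_iff_integrableOn_Ioc_of_le (by linarith)]
    have hsplit : Ioc (0:ℝ) (τ+1) = Ioc 0 τ ∪ Ioc τ (τ+1) :=
      (Ioc_union_Ioc_eq_Ioc hτ0 (by linarith)).symm
    rw [hsplit]
    apply MeasureTheory.IntegrableOn.union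
    · -- on Ioc 0 τ
      have hIoo : MeasureTheory.IntegrableOn h (Ioo 0 τ) volume := by
        have hmeas : MeasureTheory.AEStronglyMeasurable h (volume.restrict (Ioo 0 τ)) := by
          have hch : ContinuousOn h (Ico 0 τ) :=
            (hfc.comp_continuousOn hcxIco).add (hκc.comp_continuousOn hcxIco)
          exact (hch.mono Ioo_subset_Ico_self).aestronglyMeasurable measurableSet_Ioo
        refine MeasureTheory.Integrable.mono' (g := fun _ => M)
          (MeasureTheory.integrableOn_const measure_Ioo_lt_top.ne) hmeas ?_
        rw [MeasureTheory.ae_restrict_iff' measurableSet_Ioo]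
        apply MeasureTheory.ae_of_all
        intro s hs
        exact hMB (x s) (hxbd s hs.1.le hs.2)
      exact hIoo.congr_set_ae Ioo_ae_eq_Ioc.symm
    · -- on Ioc τ (τ+1) : h is constant there
      have hconstId : EqOn h (fun _ => f x₀ + κ x₀) (Ioc τ (τ+1)) := by
        intro s hs
        simp only [hh]
        rw [hconst s hs.1]
      refine MeasureTheory.IntegrableOn.congr_fun ?_ hconstId.symm measurableSet_Ioc
      exact MeasureTheory.integrableOn_const measure_Ioc_lt_top.ne
  exact hup (τ + 1) (lt_add_one τ) hIτ1

set_option maxHeartbeats 2000000 in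
/-- Uniform-in-time bound `|𝓡_t^{ε,δ}|^p ≤ C·δ^{2p}/ε^p` for the difference
between the Riemann sum and the integral of `κ'(x)·f(x)·E(·,t)`, scaled by `δ/(2ε)`. -/
theorem stmt8
    (f κ : ℝ → ℝ) (x₀ : ℝ) (x : ℝ → ℝ)
    -- Assumption (A1)
    (lam ξ μ Lκ γ : ℝ) (q : ℕ)
    (hlam : 0 < lam) (hξ : 0 < ξ) (hμ : 0 < μ) (hLκ : 0 < Lκ) (hγ : 0 < γ)
    (hcontr : ∀ a b : ℝ, (a - b) * (f a - f b) ≤ -lam * (a - b) ^ 2)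
    (hfLip : ∀ a b : ℝ, |f a - f b| ≤ (ξ * (|a| ^ q + |b| ^ q) + μ) * |a - b|)
    (hκLip : ∀ a b : ℝ, |κ a - κ b| ≤ Lκ * |a - b|)
    (hgap : lam / 2 - Lκ > 0)
    (hκbd : ∀ a : ℝ, |κ a| ≤ γ)
    -- Assumption (A3)
    (hfd : Differentiable ℝ f) (hfd2 : Differentiable ℝ (deriv f))
    (hκd : Differentiable ℝ κ) (hκd2 : Differentiable ℝ (deriv κ))
    (K : ℝ) (hK : ∀ y : ℝ, |deriv (deriv κ) y| ≤ K)
    (cf : ℝ) (rf : ℕ) (hf2 : ∀ y : ℝ, |deriv (deriv f) y| ≤ cf * (1 + |y| ^ rf))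
    (Cstar : ℝ) (hCstar : 0 < Cstar)
    (hint : ∀ m : ℕ, (m = 1 ∨ m = 2) → ∀ t : ℝ, 0 ≤ t →
      (∫ s in (0:ℝ)..t,
        Real.exp ((m : ℝ) * ∫ u in s..t, (deriv f (x u) + deriv κ (x u)))) ≤ Cstar)
    -- the closed-loop ODE `dx/dt = f(x) + κ(x)`, `x(0) = x₀`
    (hx : ∀ t : ℝ, 0 ≤ t → x t = x₀ + ∫ s in (0:ℝ)..t, (f (x s) + κ (x s)))
    :
    ∀ p : ℕ, 1 ≤ p → ∃ C : ℝ, 0 < C ∧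
      ∀ ε δ : ℝ, 0 < ε → ε < 1 → 0 < δ → δ < 1 → ∀ t : ℝ, 0 ≤ t →
      |(δ / (2 * ε)) *
          ((∑ i ∈ Finset.range (⌊t / δ⌋).toNat,
              δ * deriv κ (x ((i : ℝ) * δ)) * f (x ((i : ℝ) * δ)) *
                Real.exp (∫ u in (((i : ℝ) + 1) * δ)..t,
                  (deriv f (x u) + deriv κ (x u))))
            - ∫ s in (0:ℝ)..t,
                deriv κ (x s) * f (x s) *
                  Real.exp (∫ u in s..t, (deriv f (x u) + deriv κ (x u))))| ^ p
        ≤ C * δ ^ (2 * p) / ε ^ p := by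
  intro p hp
  have hfc : Continuous f := hfd.continuous
  have hκc : Continuous κ := hκd.continuous
  have hf'c : Continuous (deriv f) := hfd2.continuous
  have hκ'c : Continuous (deriv κ) := hκd2.continuous
  have hγ0 : (0:ℝ) ≤ γ := le_trans (abs_nonneg _) (hκbd 0)
  set R : ℝ := max (max |x₀| ((|f 0| + γ) / lam)) 1 with hRdef
  have hR1 : (1:ℝ) ≤ R := le_max_right _ _
  have hR0 : |x₀| ≤ R := le_trans (le_max_left _ _) (le_max_left _ _)
  have hRB : (|f 0| + γ) / lam ≤ R := le_trans (le_max_right _ _) (le_max_left _ _)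
  have hRnn : (0:ℝ) ≤ R := by linarith
  set Lf : ℝ := ξ * (R ^ q + R ^ q) + μ with hLfdef
  have hLfpos : 0 < Lf := by
    have h1 : 0 ≤ ξ * (R ^ q + R ^ q) := mul_nonneg hξ.le (by positivity)
    linarith
  have hfLipR : ∀ a b : ℝ, |a| ≤ R → |b| ≤ R → |f a - f b| ≤ Lf * |a - b| := by
    intro a b ha hb
    refine le_trans (hfLip a b) (mul_le_mul_of_nonneg_right ?_ (abs_nonneg _))
    have h1 : |a| ^ q ≤ R ^ q := pow_le_pow_left₀ (abs_nonneg a) ha q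
    have h2 : |b| ^ q ≤ R ^ q := pow_le_pow_left₀ (abs_nonneg b) hb q
    have h3 : ξ * (|a| ^ q + |b| ^ q) ≤ ξ * (R ^ q + R ^ q) :=
      mul_le_mul_of_nonneg_left (by linarith) hξ.le
    linarith
  set Mf : ℝ := |f 0| + Lf * R with hMfdef
  have hfbdR : ∀ v : ℝ, |v| ≤ R → |f v| ≤ Mf := by
    intro v hv
    have h1 : |f v - f 0| ≤ Lf * |v - 0| := hfLipR v 0 hv (by simpa using hRnn)
    have h2 : |v - 0| ≤ R := by simpa using hv
    have h3 : |f v| ≤ |f 0| + |f v - f 0| := by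
      calc |f v| = |f 0 + (f v - f 0)| := by ring_nf
      _ ≤ |f 0| + |f v - f 0| := abs_add_le _ _
    have h4 : Lf * |v - 0| ≤ Lf * R := mul_le_mul_of_nonneg_left h2 hLfpos.le
    linarith
  have hMfpos : 0 < Mf := by
    have : 0 < Lf * R := mul_pos hLfpos (by linarith)
    have := abs_nonneg (f 0)
    linarith
  set M : ℝ := Mf + γ with hMdef
  have hMpos : 0 < M := by linarith
  have hMB : ∀ v : ℝ, |v| ≤ R → |f v + κ v| ≤ M := fun v hv =>
    le_trans (abs_add_le _ _) (add_le_add (hfbdR v hv) (hκbd v))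
  have hInt : ∀ T : ℝ, 0 ≤ T → IntervalIntegrable (fun s => f (x s) + κ (x s)) volume 0 T :=
    bootstrap f κ hfc hκc lam γ hlam hcontr hκbd x₀ x hx R hR0 hRB M hMB
  have hxbd : ∀ s : ℝ, 0 ≤ s → |x s| ≤ R := fun s hs =>
    good_bound f κ hfc hκc lam γ hlam hcontr hκbd x₀ x hx s hs (hInt s hs) R hR0 hRB s ⟨hs, le_rfl⟩
  have hcx : ContinuousOn x (Ici 0) := by
    intro s hs
    have hs0 : (0:ℝ) ≤ s := hs
    have hcxI := (good f κ hfc hκc x₀ x hx (s+1) (by linarith) (hInt (s+1) (by linarith))).1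
    have h1 : ContinuousWithinAt x (Icc 0 (s+1)) s := hcxI s ⟨hs0, by linarith⟩
    have h2 : ContinuousWithinAt x (Ici 0 ∩ Iio (s+1)) s :=
      h1.mono (fun u hu => ⟨hu.1, hu.2.le⟩)
    exact (continuousWithinAt_inter (Iio_mem_nhds (lt_add_one s))).mp h2
  have hxLip : ∀ a b : ℝ, 0 ≤ a → a ≤ b → |x b - x a| ≤ M * (b - a) := by
    intro a b ha hab
    have hb0 : (0:ℝ) ≤ b := le_trans ha hab
    have hadd := intervalIntegral.integral_add_adjacent_intervals (μ := volume)
      (a := (0:ℝ)) (b := a) (c := b) (f := fun s => f (x s) + κ (x s))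
      (hInt a ha) ((hInt b hb0).mono_set (by
        rw [uIcc_of_le hab, uIcc_of_le hb0]
        exact Icc_subset_Icc ha le_rfl))
    have h1 : x b - x a = ∫ s in a..b, (f (x s) + κ (x s)) := by
      rw [hx b hb0, hx a ha]
      linarith [hadd]
    rw [h1]
    have h2 := intervalIntegral.norm_integral_le_of_norm_le_const
      (a := a) (b := b) (C := M) (f := fun s => f (x s) + κ (x s)) (fun u hu => by
        rw [Set.uIoc_of_le hab] at hu
        simpa [Real.norm_eq_abs] using hMB (x u) (hxbd u (le_trans ha hu.1.le)))
    rw [Real.norm_eq_abs, abs_of_nonneg (by linarith : (0:ℝ) ≤ b - a)] at h2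
    exact h2
  have hκ'bd : ∀ v : ℝ, |deriv κ v| ≤ Lκ := fun v =>
    abs_deriv_le_of_slope κ (fun _ => Lκ) v (hκd v) continuousAt_const (fun b => hκLip b v)
  have hf'bdR : ∀ v : ℝ, |v| ≤ R → |deriv f v| ≤ Lf := by
    intro v hv
    have hBc : ContinuousAt (fun b : ℝ => ξ * (|b| ^ q + |v| ^ q) + μ) v := by
      apply ContinuousAt.add _ continuousAt_const
      apply ContinuousAt.mul continuousAt_const
      exact ((continuous_abs.pow q).add continuous_const).continuousAt
    have h := abs_deriv_le_of_slope f (fun b => ξ * (|b| ^ q + |v| ^ q) + μ) v (hfd v)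
      hBc (fun b => hfLip b v)
    refine le_trans h ?_
    show ξ * (|v| ^ q + |v| ^ q) + μ ≤ Lf
    have h1 : |v| ^ q ≤ R ^ q := pow_le_pow_left₀ (abs_nonneg v) hv q
    have h3 : ξ * (|v| ^ q + |v| ^ q) ≤ ξ * (R ^ q + R ^ q) :=
      mul_le_mul_of_nonneg_left (by linarith) hξ.le
    linarith
  have hK0 : (0:ℝ) ≤ K := le_trans (abs_nonneg _) (hK 0)
  have hκ'lip : ∀ a b : ℝ, |deriv κ a - deriv κ b| ≤ K * |a - b| := by
    intro a b
    have h := Convex.norm_image_sub_le_of_norm_deriv_le (f := deriv κ) (s := Set.univ)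
      (fun v _ => hκd2 v) (fun v _ => by simpa [Real.norm_eq_abs] using hK v)
      convex_univ (Set.mem_univ b) (Set.mem_univ a)
    simpa [Real.norm_eq_abs] using h
  set Λ : ℝ := Lf + Lκ with hΛdef
  have hΛpos : 0 < Λ := by linarith
  have hAbd : ∀ v : ℝ, |v| ≤ R → |deriv κ v * f v| ≤ Lκ * Mf := by
    intro v hv
    rw [abs_mul]
    exact mul_le_mul (hκ'bd v) (hfbdR v hv) (abs_nonneg _) hLκ.le
  set LA : ℝ := Lκ * Lf + Mf * K with hLAdef
  have hLApos : 0 < LA := by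
    have h1 : 0 < Lκ * Lf := mul_pos hLκ hLfpos
    have h2 : 0 ≤ Mf * K := mul_nonneg hMfpos.le hK0
    linarith
  have hAlip : ∀ v w : ℝ, |v| ≤ R → |w| ≤ R →
      |deriv κ v * f v - deriv κ w * f w| ≤ LA * |v - w| := by
    intro v w hv hw
    have hid : deriv κ v * f v - deriv κ w * f w
        = deriv κ v * (f v - f w) + f w * (deriv κ v - deriv κ w) := by ring
    rw [hid]
    calc |deriv κ v * (f v - f w) + f w * (deriv κ v - deriv κ w)|
        ≤ |deriv κ v * (f v - f w)| + |f w * (deriv κ v - deriv κ w)| := abs_add_le _ _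
      _ = |deriv κ v| * |f v - f w| + |f w| * |deriv κ v - deriv κ w| := by
          rw [abs_mul, abs_mul]
      _ ≤ Lκ * (Lf * |v - w|) + Mf * (K * |v - w|) := by
          apply add_le_add
          · exact mul_le_mul (hκ'bd v) (hfLipR v w hv hw) (abs_nonneg _) hLκ.le
          · exact mul_le_mul (hfbdR w hw) (hκ'lip v w) (abs_nonneg _) hMfpos.le
      _ = LA * |v - w| := by rw [hLAdef]; ring
  set K₁ : ℝ := LA * M * Real.exp Λ + Lκ * Mf * (Λ * Real.exp Λ) with hK₁def
  have hK₁pos : 0 < K₁ := by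
    have h1 : 0 < LA * M * Real.exp Λ := by positivity
    have h2 : 0 ≤ Lκ * Mf * (Λ * Real.exp Λ) := by positivity
    linarith
  set K₂ : ℝ := K₁ * Cstar + Lκ * Mf * Real.exp Λ with hK₂def
  have hK₂pos : 0 < K₂ := by
    have h1 : 0 < K₁ * Cstar := mul_pos hK₁pos hCstar
    have h2 : 0 ≤ Lκ * Mf * Real.exp Λ := by positivity
    linarith
  refine ⟨(K₂ + 1) ^ p, by positivity, ?_⟩
  intro ε δ hε hε1 hδ hδ1 t ht

  -- ====== fixed ε, δ, t ======
  set y : ℝ → ℝ := fun s => x (max s 0) with hydef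
  have hyR : ∀ s : ℝ, |y s| ≤ R := fun s => hxbd _ (le_max_right s 0)
  have hyx : ∀ s : ℝ, 0 ≤ s → y s = x s := fun s hs => by
    simp only [hydef]; rw [max_eq_left hs]
  have hyc : Continuous y :=
    hcx.comp_continuous (continuous_id.max continuous_const) (fun s => le_max_right s 0)
  have hylip : ∀ a b : ℝ, |y a - y b| ≤ M * |a - b| := by
    intro a b
    rcases le_total (max a 0) (max b 0) with hab | hab
    · have h1 := hxLip (max a 0) (max b 0) (le_max_right a 0) hab
      have h2 : |max b 0 - max a 0| ≤ |b - a| := abs_max_sub_max_le_abs b a 0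
      rw [abs_of_nonneg (by linarith)] at h2
      have h3 : |y a - y b| = |x (max b 0) - x (max a 0)| := by
        simp only [hydef]; rw [abs_sub_comm]
      rw [h3, abs_sub_comm a b]
      calc |x (max b 0) - x (max a 0)| ≤ M * (max b 0 - max a 0) := h1
        _ ≤ M * |b - a| := mul_le_mul_of_nonneg_left h2 hMpos.le
    · have h1 := hxLip (max b 0) (max a 0) (le_max_right b 0) hab
      have h2 : |max a 0 - max b 0| ≤ |a - b| := abs_max_sub_max_le_abs a b 0
      rw [abs_of_nonneg (by linarith)] at h2
      simp only [hydef]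
      calc |x (max a 0) - x (max b 0)| ≤ M * (max a 0 - max b 0) := h1
        _ ≤ M * |a - b| := mul_le_mul_of_nonneg_left h2 hMpos.le
  set w : ℝ → ℝ := fun u => deriv f (y u) + deriv κ (y u) with hwdef
  have hwc : Continuous w := (hf'c.comp hyc).add (hκ'c.comp hyc)
  have hwbd : ∀ u : ℝ, |w u| ≤ Λ := fun u =>
    le_trans (abs_add_le _ _) (add_le_add (hf'bdR _ (hyR u)) (hκ'bd _))
  have hwint : ∀ a b : ℝ, IntervalIntegrable w volume a b := fun a b =>
    hwc.intervalIntegrable a b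
  set E : ℝ → ℝ := fun s => Real.exp (∫ u in s..t, w u) with hEdef
  have hEpos : ∀ s, 0 < E s := fun s => Real.exp_pos _
  have hEc : Continuous E := by
    have hPc : Continuous (fun s => ∫ u in (0:ℝ)..s, w u) :=
      intervalIntegral.continuous_primitive hwint 0
    have hEeq : E = fun s => Real.exp ((∫ u in (0:ℝ)..t, w u) - ∫ u in (0:ℝ)..s, w u) := by
      funext s
      simp only [hEdef]
      congr 1
      have h := intervalIntegral.integral_add_adjacent_intervals (hwint 0 s) (hwint s t)
      linarith
    rw [hEeq]
    exact Real.continuous_exp.comp (continuous_const.sub hPc)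
  set G : ℝ → ℝ := fun s => deriv κ (y s) * f (y s) * E s with hGdef
  have hGc : Continuous G := ((hκ'c.comp hyc).mul (hfc.comp hyc)).mul hEc
  have hGint : ∀ a b : ℝ, IntervalIntegrable G volume a b := fun a b => hGc.intervalIntegrable a b
  have hEint : ∀ a b : ℝ, IntervalIntegrable E volume a b := fun a b => hEc.intervalIntegrable a b
  have hGbd : ∀ s : ℝ, |G s| ≤ Lκ * Mf * E s := by
    intro s
    simp only [hGdef]
    rw [abs_mul, abs_of_pos (hEpos s)]
    exact mul_le_mul_of_nonneg_right (hAbd _ (hyR s)) (hEpos s).le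
  set N : ℕ := (⌊t / δ⌋).toNat with hNdef
  have htδ : (0:ℝ) ≤ t / δ := by positivity
  have hNcast : ((N:ℝ)) = ((⌊t / δ⌋ : ℤ) : ℝ) := by
    exact_mod_cast Int.toNat_of_nonneg (Int.floor_nonneg.mpr htδ)
  have hNle : (N:ℝ) ≤ t / δ := by rw [hNcast]; exact Int.floor_le _
  have hNδt : (N:ℝ) * δ ≤ t := (le_div_iff₀ hδ).mp hNle
  have htNδ : t < ((N:ℝ) + 1) * δ := by
    have h := Int.lt_floor_add_one (t / δ)
    rw [← hNcast] at h
    exact (div_lt_iff₀ hδ).mp h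
  have hsum_eq : (∑ i ∈ Finset.range N,
      δ * deriv κ (x ((i : ℝ) * δ)) * f (x ((i : ℝ) * δ)) *
        Real.exp (∫ u in (((i : ℝ) + 1) * δ)..t, (deriv f (x u) + deriv κ (x u))))
      = ∑ i ∈ Finset.range N,
          δ * (deriv κ (y ((i:ℝ)*δ)) * f (y ((i:ℝ)*δ)) * E (((i:ℝ)+1)*δ)) := by
    refine Finset.sum_congr rfl (fun i _ => ?_)
    have hid0 : (0:ℝ) ≤ (i:ℝ)*δ := by positivity
    have hxy : x ((i:ℝ)*δ) = y ((i:ℝ)*δ) := (hyx _ hid0).symm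
    have hinner : (∫ u in (((i:ℝ)+1)*δ)..t, (deriv f (x u) + deriv κ (x u)))
        = ∫ u in (((i:ℝ)+1)*δ)..t, w u := by
      refine intervalIntegral.integral_congr (fun u hu => ?_)
      have hu0 : (0:ℝ) ≤ u := le_trans (le_min (by positivity) ht) hu.1
      simp only [hwdef]
      rw [hyx u hu0]
    rw [hxy, hinner]
    simp only [hEdef]
    ring
  have hint_eq : (∫ s in (0:ℝ)..t, deriv κ (x s) * f (x s) *
        Real.exp (∫ u in s..t, (deriv f (x u) + deriv κ (x u))))
      = ∫ s in (0:ℝ)..t, G s := by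
    refine intervalIntegral.integral_congr (fun s hs => ?_)
    rw [uIcc_of_le ht] at hs
    have hinner : (∫ u in s..t, (deriv f (x u) + deriv κ (x u))) = ∫ u in s..t, w u := by
      refine intervalIntegral.integral_congr (fun u hu => ?_)
      have hu0 : (0:ℝ) ≤ u := le_trans (le_min hs.1 ht) hu.1
      simp only [hwdef]; rw [hyx u hu0]
    simp only [hGdef, hEdef]
    rw [hyx s hs.1, hinner]
  rw [hsum_eq, hint_eq]
  set S : ℝ := ∑ i ∈ Finset.range N,
      δ * (deriv κ (y ((i:ℝ)*δ)) * f (y ((i:ℝ)*δ)) * E (((i:ℝ)+1)*δ)) with hSdef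
  have hadj : ∀ (F : ℝ → ℝ), (∀ a b : ℝ, IntervalIntegrable F volume a b) →
      (∑ i ∈ Finset.range N, ∫ s in ((i:ℝ)*δ)..(((i:ℝ)+1)*δ), F s)
        = ∫ s in (0:ℝ)..((N:ℝ)*δ), F s := by
    intro F hF
    have h := intervalIntegral.sum_integral_adjacent_intervals
      (a := fun i : ℕ => (i:ℝ)*δ) (n := N) (fun k _ => hF _ _)
    simp only [Nat.cast_zero, zero_mul, Nat.cast_add, Nat.cast_one] at h
    exact h
  have hKey : ∀ i : ℕ, i < N →
      |δ * (deriv κ (y ((i:ℝ)*δ)) * f (y ((i:ℝ)*δ)) * E (((i:ℝ)+1)*δ))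
        - ∫ s in ((i:ℝ)*δ)..(((i:ℝ)+1)*δ), G s|
      ≤ K₁ * δ * ∫ s in ((i:ℝ)*δ)..(((i:ℝ)+1)*δ), E s := by
    intro i hi
    set a : ℝ := (i:ℝ)*δ with hadef
    set b : ℝ := ((i:ℝ)+1)*δ with hbdef
    have hba : b - a = δ := by rw [hadef, hbdef]; ring
    have hab : a ≤ b := by linarith [hδ.le]
    have ha0 : (0:ℝ) ≤ a := by rw [hadef]; positivity
    have hbt : b ≤ t := by
      have h1 : (i:ℝ) + 1 ≤ (N:ℝ) := by exact_mod_cast hi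
      have h2 : b ≤ (N:ℝ)*δ := by
        rw [hbdef]; exact mul_le_mul_of_nonneg_right h1 hδ.le
      linarith
    have hpt : ∀ s ∈ Icc a b,
        |deriv κ (y a) * f (y a) * E b - G s| ≤ K₁ * δ * E s := by
      intro s hs
      have hs0 : (0:ℝ) ≤ s := le_trans ha0 hs.1
      have hsb : s ≤ b := hs.2
      have hbs : b - s ≤ δ := by linarith [hs.1]
      set J : ℝ := ∫ u in s..b, w u with hJdef
      have hJbd : |J| ≤ Λ * δ := by
        have h := intervalIntegral.norm_integral_le_of_norm_le_const
          (a := s) (b := b) (C := Λ) (f := w)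
          (fun u _ => by simpa [Real.norm_eq_abs] using hwbd u)
        rw [Real.norm_eq_abs, abs_of_nonneg (by linarith : (0:ℝ) ≤ b - s)] at h
        exact le_trans h (mul_le_mul_of_nonneg_left hbs hΛpos.le)
      have hJΛ : |J| ≤ Λ := le_trans hJbd (mul_le_of_le_one_right hΛpos.le hδ1.le)
      have hEb : E b = E s * Real.exp (-J) := by
        simp only [hEdef]
        rw [← Real.exp_add]
        congr 1
        have h := intervalIntegral.integral_add_adjacent_intervals (hwint s b) (hwint b t)
        simp only [hJdef]
        linarith
      have hexpJ : Real.exp (-J) ≤ Real.exp Λ :=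
        Real.exp_le_exp.mpr (le_trans (neg_le_abs J) hJΛ)
      have hEbound : E b ≤ E s * Real.exp Λ := by
        rw [hEb]; exact mul_le_mul_of_nonneg_left hexpJ (hEpos s).le
      have hEdiff : |E b - E s| ≤ E s * (Λ * δ * Real.exp Λ) := by
        rw [hEb, show E s * Real.exp (-J) - E s = E s * (Real.exp (-J) - 1) by ring,
          abs_mul, abs_of_pos (hEpos s)]
        refine mul_le_mul_of_nonneg_left ?_ (hEpos s).le
        refine le_trans (abs_exp_sub_one_le' (-J)) ?_
        rw [abs_neg]
        exact mul_le_mul hJbd (Real.exp_le_exp.mpr hJΛ) (Real.exp_pos _).le (by positivity)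
      have hyA : |y a - y s| ≤ M * δ := by
        refine le_trans (hylip a s) ?_
        have h1 : |a - s| ≤ δ := by
          rw [abs_of_nonpos (by linarith : a - s ≤ 0)]
          linarith [hs.1]
        exact mul_le_mul_of_nonneg_left h1 hMpos.le
      have hterm : deriv κ (y a) * f (y a) * E b - G s
          = (deriv κ (y a) * f (y a) - deriv κ (y s) * f (y s)) * E b
            + deriv κ (y s) * f (y s) * (E b - E s) := by
        simp only [hGdef]; ring
      rw [hterm]
      calc |(deriv κ (y a) * f (y a) - deriv κ (y s) * f (y s)) * E b
            + deriv κ (y s) * f (y s) * (E b - E s)|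
          ≤ |deriv κ (y a) * f (y a) - deriv κ (y s) * f (y s)| * E b
            + |deriv κ (y s) * f (y s)| * |E b - E s| := by
            refine le_trans (abs_add_le _ _) ?_
            rw [abs_mul, abs_mul, abs_of_pos (hEpos b)]
        _ ≤ (LA * (M * δ)) * (E s * Real.exp Λ)
            + (Lκ * Mf) * (E s * (Λ * δ * Real.exp Λ)) := by
            refine add_le_add ?_ ?_
            · refine mul_le_mul ?_ hEbound (hEpos b).le (by positivity)
              exact le_trans (hAlip _ _ (hyR a) (hyR s))
                (mul_le_mul_of_nonneg_left hyA hLApos.le)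
            · exact mul_le_mul (hAbd _ (hyR s)) hEdiff (abs_nonneg _) (by positivity)
        _ = K₁ * δ * E s := by rw [hK₁def]; ring
    have hconst : δ * (deriv κ (y a) * f (y a) * E b)
        = ∫ _ in a..b, deriv κ (y a) * f (y a) * E b := by
      rw [intervalIntegral.integral_const, smul_eq_mul, hba]
    rw [hconst, ← intervalIntegral.integral_sub intervalIntegrable_const (hGint a b)]
    refine le_trans (intervalIntegral.abs_integral_le_integral_abs hab) ?_
    rw [← intervalIntegral.integral_const_mul]
    refine intervalIntegral.integral_mono_on hab ?_ ?_ hpt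
    · exact ((continuous_const.sub hGc).abs).intervalIntegrable a b
    · exact (continuous_const.mul hEc).intervalIntegrable a b
  have hsplit2 : (∫ s in (0:ℝ)..t, G s)
      = (∫ s in (0:ℝ)..((N:ℝ)*δ), G s) + ∫ s in ((N:ℝ)*δ)..t, G s :=
    (intervalIntegral.integral_add_adjacent_intervals (hGint _ _) (hGint _ _)).symm
  have hECstar : (∫ s in (0:ℝ)..((N:ℝ)*δ), E s) ≤ Cstar := by
    have h1 : (∫ s in (0:ℝ)..((N:ℝ)*δ), E s) ≤ ∫ s in (0:ℝ)..t, E s := by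
      have h2 := intervalIntegral.integral_add_adjacent_intervals
        (hEint 0 ((N:ℝ)*δ)) (hEint ((N:ℝ)*δ) t)
      have h3 : (0:ℝ) ≤ ∫ s in ((N:ℝ)*δ)..t, E s :=
        intervalIntegral.integral_nonneg hNδt (fun u _ => (hEpos u).le)
      linarith
    refine le_trans h1 ?_
    have h4 := hint 1 (Or.inl rfl) t ht
    simp only [Nat.cast_one, one_mul] at h4
    have h5 : (∫ s in (0:ℝ)..t,
        Real.exp (∫ u in s..t, (deriv f (x u) + deriv κ (x u))))
        = ∫ s in (0:ℝ)..t, E s := by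
      refine intervalIntegral.integral_congr (fun s hs => ?_)
      rw [uIcc_of_le ht] at hs
      have hinner : (∫ u in s..t, (deriv f (x u) + deriv κ (x u))) = ∫ u in s..t, w u := by
        refine intervalIntegral.integral_congr (fun u hu => ?_)
        have hu0 : (0:ℝ) ≤ u := le_trans (le_min hs.1 ht) hu.1
        simp only [hwdef]; rw [hyx u hu0]
      simp only [hEdef]
      rw [hinner]
    rw [h5] at h4
    exact h4
  have hsum_bd : |S - ∫ s in (0:ℝ)..((N:ℝ)*δ), G s| ≤ K₁ * δ * Cstar := by
    rw [hSdef, ← hadj G hGint, ← Finset.sum_sub_distrib]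
    refine le_trans (Finset.abs_sum_le_sum_abs _ _) ?_
    calc (∑ i ∈ Finset.range N,
          |δ * (deriv κ (y ((i:ℝ)*δ)) * f (y ((i:ℝ)*δ)) * E (((i:ℝ)+1)*δ))
            - ∫ s in ((i:ℝ)*δ)..(((i:ℝ)+1)*δ), G s|)
        ≤ ∑ i ∈ Finset.range N, K₁ * δ * ∫ s in ((i:ℝ)*δ)..(((i:ℝ)+1)*δ), E s :=
          Finset.sum_le_sum (fun i hi => hKey i (Finset.mem_range.mp hi))
      _ = K₁ * δ * ∫ s in (0:ℝ)..((N:ℝ)*δ), E s := by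
          rw [← Finset.mul_sum, hadj E hEint]
      _ ≤ K₁ * δ * Cstar := by
          refine mul_le_mul_of_nonneg_left hECstar (by positivity)
  have htail : |∫ s in ((N:ℝ)*δ)..t, G s| ≤ Lκ * Mf * Real.exp Λ * δ := by
    have hbnd : ∀ s ∈ Set.uIoc ((N:ℝ)*δ) t, ‖G s‖ ≤ Lκ * Mf * Real.exp Λ := by
      intro s hs
      rw [Set.uIoc_of_le hNδt] at hs
      have hNδ0 : (0:ℝ) ≤ (N:ℝ)*δ := by positivity
      have hs0 : (0:ℝ) ≤ s := le_trans hNδ0 hs.1.le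
      have hwst : (∫ u in s..t, w u) ≤ Λ := by
        have h := intervalIntegral.norm_integral_le_of_norm_le_const
          (a := s) (b := t) (C := Λ) (f := w)
          (fun u _ => by simpa [Real.norm_eq_abs] using hwbd u)
        rw [Real.norm_eq_abs, abs_of_nonneg (by linarith [hs.2] : (0:ℝ) ≤ t - s)] at h
        have hexp : ((N:ℝ)+1)*δ = (N:ℝ)*δ + δ := by ring
        have h2 : t - s ≤ δ := by linarith [hs.1, htNδ]
        calc (∫ u in s..t, w u) ≤ |∫ u in s..t, w u| := le_abs_self _
          _ ≤ Λ * (t - s) := h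
          _ ≤ Λ * δ := mul_le_mul_of_nonneg_left h2 hΛpos.le
          _ ≤ Λ := mul_le_of_le_one_right hΛpos.le hδ1.le
      have hEs : E s ≤ Real.exp Λ := by
        simp only [hEdef]; exact Real.exp_le_exp.mpr hwst
      rw [Real.norm_eq_abs]
      calc |G s| ≤ Lκ * Mf * E s := hGbd s
        _ ≤ Lκ * Mf * Real.exp Λ := mul_le_mul_of_nonneg_left hEs (by positivity)
    have h := intervalIntegral.norm_integral_le_of_norm_le_const hbnd
    rw [Real.norm_eq_abs, abs_of_nonneg (by linarith : (0:ℝ) ≤ t - (N:ℝ)*δ)] at h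
    refine le_trans h ?_
    have hexp : ((N:ℝ)+1)*δ = (N:ℝ)*δ + δ := by ring
    have h2 : t - (N:ℝ)*δ ≤ δ := by linarith [htNδ]
    exact mul_le_mul_of_nonneg_left h2 (by positivity)
  have htotal : |S - ∫ s in (0:ℝ)..t, G s| ≤ K₂ * δ := by
    rw [hsplit2]
    have hid : S - ((∫ s in (0:ℝ)..((N:ℝ)*δ), G s) + ∫ s in ((N:ℝ)*δ)..t, G s)
        = (S - ∫ s in (0:ℝ)..((N:ℝ)*δ), G s) + -(∫ s in ((N:ℝ)*δ)..t, G s) := by ring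
    rw [hid]
    refine le_trans (abs_add_le _ _) ?_
    rw [abs_neg]
    calc |S - ∫ s in (0:ℝ)..((N:ℝ)*δ), G s| + |∫ s in ((N:ℝ)*δ)..t, G s|
        ≤ K₁ * δ * Cstar + Lκ * Mf * Real.exp Λ * δ := add_le_add hsum_bd htail
      _ = K₂ * δ := by rw [hK₂def]; ring
  have hfin1 : |δ / (2*ε) * (S - ∫ s in (0:ℝ)..t, G s)| ≤ (K₂+1) * δ^2 / ε := by
    rw [abs_mul, abs_of_pos (by positivity : (0:ℝ) < δ/(2*ε))]
    calc δ/(2*ε) * |S - ∫ s in (0:ℝ)..t, G s|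
        ≤ δ/(2*ε) * (K₂*δ) := mul_le_mul_of_nonneg_left htotal (by positivity)
      _ ≤ (K₂+1)*δ^2/ε := by
          rw [div_mul_eq_mul_div, div_le_div_iff₀ (by positivity) hε]
          have hA : (0:ℝ) ≤ δ^2*ε := by positivity
          have hB : (0:ℝ) ≤ K₂*(δ^2*ε) := mul_nonneg hK₂pos.le hA
          have hid2 : δ * (K₂ * δ) * ε = K₂*(δ^2*ε) := by ring
          have hid3 : (K₂+1)*δ^2*(2*ε) = 2*(K₂*(δ^2*ε)) + 2*(δ^2*ε) := by ring
          rw [hid2, hid3]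
          linarith
  calc |δ / (2*ε) * (S - ∫ s in (0:ℝ)..t, G s)| ^ p
      ≤ ((K₂+1) * δ^2 / ε) ^ p := pow_le_pow_left₀ (abs_nonneg _) hfin1 p
    _ = (K₂+1)^p * δ^(2*p) / ε^p := by
        rw [div_pow, mul_pow, ← pow_mul]
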